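/- Let R be a (possibly noncommutative) ring, let g be a unit of R with inverse h, and for each channel index α ∈ Fin 3 let K_α, T_α ∈ R satisfy the Bethe–Salpeter relation T_α = K_α + K_α·g·T_α. Write δ̄_{αβ} = 1 − δ_{αβ} (equal to 1 if α ≠ β and 0 if α = β). Suppose U : Fin 3 → Fin 3 → R satisfies the covariant AGS equations U_{αβ} = δ̄_{αβ}·h + Σ_γ δ̄_{αγ}·T_γ·g·U_{γβ}. Then the element M := Σ_{α,β} T_α·g·U_{αβ}·g·T_β satisfies M = Σ_{α,β} δ̄_{αβ}·K_α·g·T_β + Σ_α K_α·g·M. (This is the paper's claim that its Eq. (M2) formally solves the integral equation for the connected two-particle-irreducible NNπ → NNπ amplitude M^{(2)}.) -/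
import Mathlib


/-- The element `M := Σ_{α,β} T_α·g·U_{αβ}·g·T_β`, built from the covariant
AGS amplitudes `U`, formally solves the integral equation for the connected
two-particle-irreducible `NNπ → NNπ` amplitude `M^{(2)}`. -/
theorem ags_solves_M2 {R : Type*} [Ring R] (g h : R)
    (hgh : g * h = 1) (hhg : h * g = 1)
    (K T : Fin 3 → R)
    (hBS : ∀ α, T α = K α + K α * g * T α)
    (U : Fin 3 → Fin 3 → R)
    (hAGS : ∀ α β, U α β = (if α = β then (0 : R) else 1) * h +
      ∑ γ, (if α = γ then (0 : R) else 1) * (T γ * (g * U γ β)))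
    (M : R)
    (hM : M = ∑ α, ∑ β, T α * (g * (U α β * (g * T β)))) :
    M = (∑ α, ∑ β, (if α = β then (0 : R) else 1) * (K α * (g * T β))) +
      ∑ α, K α * (g * M) := by
  -- abbreviation
  set Y : Fin 3 → R := fun α => ∑ β, U α β * (g * T β) with hYdef
  -- fill-diagonal lemma
  have fill : ∀ (α : Fin 3) (x : Fin 3 → R),
      (∑ γ, (if α = γ then (0 : R) else 1) * x γ) + x α = ∑ γ, x γ := by
    intro α x
    have key : ∀ γ, (if α = γ then (0 : R) else 1) * x γ
        = x γ - (if γ = α then x γ else 0) := by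
      intro γ
      rcases eq_or_ne α γ with hc | hc
      · simp [hc]
      · simp [hc, hc.symm]
    simp_rw [key, Finset.sum_sub_distrib, Finset.sum_ite_eq',
      Finset.mem_univ, if_pos]
    abel
  -- key recursion for Y from the AGS equations
  have hYeq : ∀ α, Y α = (∑ β, (if α = β then (0 : R) else 1) * T β)
      + ∑ γ, (if α = γ then (0 : R) else 1) * (T γ * (g * Y γ)) := by
    intro α
    have step : Y α = ∑ β, (((if α = β then (0 : R) else 1) * h) * (g * T β) +
        (∑ γ, (if α = γ then (0 : R) else 1) * (T γ * (g * U γ β))) * (g * T β)) := by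
      simp only [hYdef]
      refine Finset.sum_congr rfl fun β _ => ?_
      rw [← add_mul, ← hAGS]
    rw [step, Finset.sum_add_distrib]
    congr 1
    · refine Finset.sum_congr rfl fun β _ => ?_
      rw [mul_assoc, ← mul_assoc h, hhg, one_mul]
    · simp_rw [Finset.sum_mul]
      rw [Finset.sum_comm]
      refine Finset.sum_congr rfl fun γ _ => ?_
      simp only [hYdef, Finset.mul_sum]
      refine Finset.sum_congr rfl fun β _ => ?_
      noncomm_ring
  -- rewrite M
  have hM' : M = ∑ α, T α * (g * Y α) := by
    rw [hM]
    refine Finset.sum_congr rfl fun α _ => ?_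
    simp only [hYdef, Finset.mul_sum]
  -- main computation
  calc M = ∑ α, T α * (g * Y α) := hM'
    _ = ∑ α, (K α * (g * Y α) + K α * (g * (T α * (g * Y α)))) := by
        refine Finset.sum_congr rfl fun α _ => ?_
        conv_lhs => rw [hBS α]
        noncomm_ring
    _ = ∑ α, ((∑ β, (if α = β then (0 : R) else 1) * (K α * (g * T β))) +
          K α * (g * M)) := by
        refine Finset.sum_congr rfl fun α _ => ?_
        have h2 : Y α + T α * (g * Y α)
            = (∑ β, (if α = β then (0 : R) else 1) * T β) + M := by
          nth_rewrite 1 [hYeq α]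
          rw [add_assoc, fill α (fun γ => T γ * (g * Y γ)), ← hM']
        calc K α * (g * Y α) + K α * (g * (T α * (g * Y α)))
            = K α * (g * (Y α + T α * (g * Y α))) := by rw [mul_add, mul_add]
          _ = K α * (g * ((∑ β, (if α = β then (0 : R) else 1) * T β) + M)) := by
              rw [h2]
          _ = K α * (g * ∑ β, (if α = β then (0 : R) else 1) * T β) +
                K α * (g * M) := by rw [mul_add, mul_add]
          _ = (∑ β, (if α = β then (0 : R) else 1) * (K α * (g * T β))) +
                K α * (g * M) := by
              congr 1
              rw [Finset.mul_sum, Finset.mul_sum]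
              refine Finset.sum_congr rfl fun β _ => ?_
              rcases eq_or_ne α β with hc | hc <;> simp [hc]
    _ = (∑ α, ∑ β, (if α = β then (0 : R) else 1) * (K α * (g * T β))) +
          ∑ α, K α * (g * M) := by
        rw [Finset.sum_add_distrib]
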